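/- Let d = 2 and μ₂ the measure r·dr on (0,∞). Define U f(r) = χ_{(1/2,∞)}(r) · sup_{t∈[1,2], t<2r} (1/r) ∫_{|r−t|}^{r+t} z f(z) dz. Then U is bounded from L¹(μ₂) to L^p(μ₂) for every 1 ≤ p ≤ ∞. -/

import Mathlib

open Set MeasureTheory
open scoped ENNReal NNReal

noncomputable section

/-- The measure `μ₂` on `(0,∞)` with density `r`. -/
def mu2 : Measure ℝ :=
  (volume.restrict (Ioi (0 : ℝ))).withDensity fun r => ENNReal.ofReal r

/-- The `L^p(μ)` norm of an `ℝ≥0∞`-valued function (with `p = ∞` meaning the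
essential supremum). -/
def lpNormE (μ : Measure ℝ) (p : ℝ≥0∞) (g : ℝ → ℝ≥0∞) : ℝ≥0∞ :=
  if p = ∞ then essSup g μ else (∫⁻ r, g r ^ p.toReal ∂μ) ^ (1 / p.toReal)

/-- `U f(r) = χ_{(1/2,∞)}(r) · sup_{t∈[1,2], t<2r} (1/r) ∫_{|r−t|}^{r+t} z f(z) dz`. -/
def Uop (f : ℝ → ℝ≥0∞) (r : ℝ) : ℝ≥0∞ :=
  if 1 / 2 < r then
    ⨆ t ∈ {t : ℝ | t ∈ Icc (1 : ℝ) 2 ∧ t < 2 * r},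
      (ENNReal.ofReal r)⁻¹ * ∫⁻ z in Icc |r - t| (r + t), ENNReal.ofReal z * f z
  else 0

section Aux

variable (f : ℝ → ℝ≥0∞) (hf : Measurable f)

/-- Abbreviation for the density-weighted integrand. -/
private def hfun : ℝ → ℝ≥0∞ := fun z => ENNReal.ofReal z * f z

private lemma hfun_meas (hf : Measurable f) : Measurable (hfun f) :=
  ENNReal.measurable_ofReal.mul hf

private lemma hfun_eq_indicator : ∀ z, hfun f z = (Ioi (0:ℝ)).indicator (hfun f) z := by
  intro z
  by_cases hz : z ∈ Ioi (0:ℝ)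
  · rw [Set.indicator_of_mem hz]
  · rw [Set.indicator_of_notMem hz]
    have : z ≤ 0 := le_of_not_gt hz
    simp [hfun, ENNReal.ofReal_eq_zero.2 this]

private lemma lintegral_hfun_full :
    ∫⁻ z, hfun f z = ∫⁻ z in Ioi (0:ℝ), hfun f z := by
  rw [← lintegral_indicator measurableSet_Ioi]
  exact lintegral_congr (hfun_eq_indicator f)

/-- Pointwise bound: `Uop f r ≤ 2 * ∫ hfun`. -/
private lemma Uop_pointwise_le :
    ∀ r, Uop f r ≤ 2 * ∫⁻ z in Ioi (0:ℝ), hfun f z := by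
  intro r
  unfold Uop
  split_ifs with hr
  · refine iSup₂_le fun t ht => ?_
    have hIle : (∫⁻ z in Icc |r - t| (r + t), ENNReal.ofReal z * f z)
        ≤ ∫⁻ z in Ioi (0:ℝ), hfun f z := by
      rw [← lintegral_hfun_full]
      exact setLIntegral_le_lintegral _ _
    have hinv : (ENNReal.ofReal r)⁻¹ ≤ 2 := by
      have h1 : ENNReal.ofReal (1/2 : ℝ) ≤ ENNReal.ofReal r :=
        ENNReal.ofReal_le_ofReal hr.le
      have h2 : (ENNReal.ofReal r)⁻¹ ≤ (ENNReal.ofReal (1/2 : ℝ))⁻¹ :=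
        ENNReal.inv_le_inv' h1
      refine h2.trans_eq ?_
      rw [show (1/2 : ℝ) = (2 : ℝ)⁻¹ by norm_num, ENNReal.ofReal_inv_of_pos (by norm_num),
        inv_inv]
      norm_num
    exact mul_le_mul' hinv hIle
  · exact zero_le

/-- The `L¹` bound: `∫ Uop f ∂μ₂ ≤ 4 * ∫ hfun`. -/
private lemma Uop_L1_bound (hf : Measurable f) :
    ∫⁻ r, Uop f r ∂mu2 ≤ 4 * ∫⁻ z in Ioi (0:ℝ), hfun f z := by
  have hof : Measurable fun r : ℝ => ENNReal.ofReal r := ENNReal.measurable_ofReal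
  have hfin : ∀ᵐ x ∂(volume.restrict (Ioi (0:ℝ))), ENNReal.ofReal x < ∞ :=
    Filter.Eventually.of_forall fun x => ENNReal.ofReal_lt_top
  rw [mu2, lintegral_withDensity_eq_lintegral_mul_non_measurable _ hof hfin]
  -- Define the majorant K
  set K : ℝ → ℝ≥0∞ := fun r =>
    (Ioi (1/2 : ℝ)).indicator (fun r => ∫⁻ z, (Icc (r-2) (r+2)).indicator (hfun f) z) r
    with hK
  have hpt : ∀ r, (fun x => ENNReal.ofReal x * Uop f x) r ≤ K r := by
    intro r
    show ENNReal.ofReal r * Uop f r ≤ K r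
    by_cases hr : 1/2 < r
    · rw [hK]
      simp only [Set.indicator_of_mem (mem_Ioi.2 hr)]
      have hU : Uop f r ≤ (ENNReal.ofReal r)⁻¹ *
          ∫⁻ z, (Icc (r-2) (r+2)).indicator (hfun f) z := by
        unfold Uop
        rw [if_pos hr]
        refine iSup₂_le fun t ht => ?_
        obtain ⟨⟨ht1, ht2⟩, _⟩ := ht
        refine mul_le_mul' le_rfl ?_
        rw [lintegral_indicator measurableSet_Icc]
        refine lintegral_mono_set (Icc_subset_Icc ?_ ?_)
        · have := le_abs_self (r - t); linarith
        · linarith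
      calc ENNReal.ofReal r * Uop f r
          ≤ ENNReal.ofReal r * ((ENNReal.ofReal r)⁻¹ *
            ∫⁻ z, (Icc (r-2) (r+2)).indicator (hfun f) z) := mul_le_mul' le_rfl hU
        _ = (ENNReal.ofReal r * (ENNReal.ofReal r)⁻¹) *
            ∫⁻ z, (Icc (r-2) (r+2)).indicator (hfun f) z := by rw [mul_assoc]
        _ ≤ 1 * ∫⁻ z, (Icc (r-2) (r+2)).indicator (hfun f) z :=
            mul_le_mul' (ENNReal.mul_inv_le_one _) le_rfl
        _ = _ := one_mul _
    · have : Uop f r = 0 := by unfold Uop; rw [if_neg hr]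
      rw [this, mul_zero]
      exact zero_le
  calc ∫⁻ r in Ioi (0:ℝ), ((fun x => ENNReal.ofReal x) * fun x => Uop f x) r
      ≤ ∫⁻ r in Ioi (0:ℝ), K r := lintegral_mono fun r => hpt r
    _ ≤ ∫⁻ r, K r := lintegral_mono' Measure.restrict_le_self le_rfl
    _ = ∫⁻ r in Ioi (1/2 : ℝ), ∫⁻ z, (Icc (r-2) (r+2)).indicator (hfun f) z :=
        lintegral_indicator measurableSet_Ioi _
    _ = ∫⁻ z, ∫⁻ r in Ioi (1/2 : ℝ), (Icc (r-2) (r+2)).indicator (hfun f) z ∂volume := by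
        apply lintegral_lintegral_swap
        have hS : MeasurableSet {q : ℝ × ℝ | q.1 - 2 ≤ q.2 ∧ q.2 ≤ q.1 + 2} := by
          refine MeasurableSet.inter ?_ ?_
          · exact measurableSet_le (measurable_fst.sub measurable_const) measurable_snd
          · exact measurableSet_le measurable_snd (measurable_fst.add measurable_const)
        have : (Function.uncurry fun r z => (Icc (r-2) (r+2)).indicator (hfun f) z) =
            {q : ℝ × ℝ | q.1 - 2 ≤ q.2 ∧ q.2 ≤ q.1 + 2}.indicator
              (fun q => hfun f q.2) := by
          funext q
          simp only [Function.uncurry, Set.indicator_apply, Set.mem_Icc, Set.mem_setOf_eq]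
        rw [this]
        exact (((hfun_meas f hf).comp measurable_snd).indicator hS).aemeasurable
    _ ≤ ∫⁻ z, hfun f z * 4 ∂volume := by
        refine lintegral_mono fun z => ?_
        have heq : ∀ r : ℝ, (Icc (r-2) (r+2)).indicator (hfun f) z =
            (Icc (z-2) (z+2)).indicator (fun _ => hfun f z) r := by
          intro r
          simp only [Set.indicator_apply, Set.mem_Icc]
          refine if_congr ⟨fun h => ⟨by linarith [h.2], by linarith [h.1]⟩,
            fun h => ⟨by linarith [h.2], by linarith [h.1]⟩⟩ rfl rfl
        calc ∫⁻ r in Ioi (1/2 : ℝ), (Icc (r-2) (r+2)).indicator (hfun f) z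
            = ∫⁻ r in Ioi (1/2 : ℝ), (Icc (z-2) (z+2)).indicator (fun _ => hfun f z) r := by
              exact lintegral_congr fun r => heq r
          _ = ∫⁻ r in Icc (z-2) (z+2), (fun _ => hfun f z) r
                ∂(volume.restrict (Ioi (1/2 : ℝ))) :=
              lintegral_indicator measurableSet_Icc _
          _ = hfun f z * (volume.restrict (Ioi (1/2 : ℝ))) (Icc (z-2) (z+2)) :=
              setLIntegral_const _ _
          _ ≤ hfun f z * volume (Icc (z-2) (z+2)) := by
              refine mul_le_mul' le_rfl ?_
              rw [Measure.restrict_apply measurableSet_Icc]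
              exact measure_mono inter_subset_left
          _ = hfun f z * 4 := by
              rw [Real.volume_Icc]
              norm_num
    _ = (∫⁻ z, hfun f z) * 4 := lintegral_mul_const _ (hfun_meas f hf)
    _ = 4 * ∫⁻ z in Ioi (0:ℝ), hfun f z := by
        rw [lintegral_hfun_full f, mul_comm]

end Aux

theorem Uop_L1_to_Lp (p : ℝ≥0∞) (hp : 1 ≤ p) :
    ∃ C : ℝ≥0, ∀ f : ℝ → ℝ≥0∞, Measurable f →
      lpNormE mu2 p (Uop f) ≤ C * lpNormE mu2 1 f := by
  refine ⟨4, fun f hf => ?_⟩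
  have hof : Measurable fun r : ℝ => ENNReal.ofReal r := ENNReal.measurable_ofReal
  set A := ∫⁻ z in Ioi (0:ℝ), hfun f z with hAdef
  have hA1 : lpNormE mu2 1 f = A := by
    rw [lpNormE, if_neg (by norm_num)]
    simp only [ENNReal.toReal_one, ENNReal.rpow_one, one_div_one]
    rw [mu2, lintegral_withDensity_eq_lintegral_mul _ hof hf]
    rfl
  have hC : ((4 : ℝ≥0) : ℝ≥0∞) = 4 := by norm_num
  rw [hA1, hC]
  have hUle : ∀ r, Uop f r ≤ 2 * A := Uop_pointwise_le f
  have hL1 : ∫⁻ r, Uop f r ∂mu2 ≤ 4 * A := Uop_L1_bound f hf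
  by_cases hptop : p = ∞
  · rw [lpNormE, if_pos hptop]
    refine le_trans (essSup_le_of_ae_le (2 * A)
      (Filter.Eventually.of_forall hUle)) ?_
    exact mul_le_mul' (by norm_num) le_rfl
  · rw [lpNormE, if_neg hptop]
    set q := p.toReal with hqdef
    have hq1 : 1 ≤ q := by
      rw [hqdef, ← ENNReal.toReal_one]
      exact ENNReal.toReal_mono hptop hp
    have hq0 : 0 < q := lt_of_lt_of_le one_pos hq1
    by_cases hA0 : A = 0
    · have hU0 : ∀ r, Uop f r = 0 := fun r =>
        le_antisymm (by simpa [hA0] using hUle r) zero_le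
      have : (∫⁻ r, Uop f r ^ q ∂mu2) = 0 := by
        simp [hU0, ENNReal.zero_rpow_of_pos hq0]
      rw [this, ENNReal.zero_rpow_of_pos (by positivity)]
      exact zero_le
    · by_cases hAtop : A = ∞
      · rw [hAtop, ENNReal.mul_top (by norm_num)]
        exact le_top
      · have h2At : (2 : ℝ≥0∞) * A ≠ ∞ := ENNReal.mul_ne_top (by norm_num) hAtop
        have h4A0 : (4 : ℝ≥0∞) * A ≠ 0 := by
          simp [hA0]
        have h4At : (4 : ℝ≥0∞) * A ≠ ∞ := ENNReal.mul_ne_top (by norm_num) hAtop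
        have hpoint : ∀ r, Uop f r ^ q ≤ (2 * A) ^ (q - 1) * Uop f r := by
          intro r
          by_cases hx : Uop f r = 0
          · rw [hx, ENNReal.zero_rpow_of_pos hq0, mul_zero]
          · have hxt : Uop f r ≠ ∞ := ne_top_of_le_ne_top h2At (hUle r)
            have heq : Uop f r ^ (q - 1) * Uop f r = Uop f r ^ q := by
              nth_rewrite 2 [← ENNReal.rpow_one (Uop f r)]
              rw [← ENNReal.rpow_add _ _ hx hxt]
              norm_num
            rw [← heq]
            exact mul_le_mul' (ENNReal.rpow_le_rpow (hUle r) (by linarith)) le_rfl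
        have hint : (∫⁻ r, Uop f r ^ q ∂mu2) ≤ (4 * A) ^ q := by
          calc (∫⁻ r, Uop f r ^ q ∂mu2)
              ≤ ∫⁻ r, (2 * A) ^ (q - 1) * Uop f r ∂mu2 := lintegral_mono hpoint
            _ = (2 * A) ^ (q - 1) * ∫⁻ r, Uop f r ∂mu2 :=
                lintegral_const_mul' _ _
                  (ENNReal.rpow_ne_top_of_nonneg (by linarith) h2At)
            _ ≤ (4 * A) ^ (q - 1) * (4 * A) := by
                refine mul_le_mul' ?_ hL1
                refine ENNReal.rpow_le_rpow ?_ (by linarith)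
                exact mul_le_mul' (by norm_num) le_rfl
            _ = (4 * A) ^ q := by
                nth_rewrite 2 [← ENNReal.rpow_one (4 * A)]
                rw [← ENNReal.rpow_add _ _ h4A0 h4At]
                norm_num
        calc (∫⁻ r, Uop f r ^ q ∂mu2) ^ (1 / q)
            ≤ ((4 * A) ^ q) ^ (1 / q) := ENNReal.rpow_le_rpow hint (by positivity)
          _ = 4 * A := by
              rw [← ENNReal.rpow_mul, mul_one_div_cancel (ne_of_gt hq0), ENNReal.rpow_one]
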